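/- Let 𝒫 be a finite set of nonempty forbidden patterns over alphabet Σ, and define the KMP-style FSM: states V are the elements of pref(𝒫) (prefixes of patterns in 𝒫, including the empty string ε) that have no suffix belonging to 𝒫; the initial state is ε; f(v, σ) is undefined if some suffix of vσ lies in 𝒫, and otherwise equals the longest suffix of vσ that lies in pref(𝒫). Then this FSM generates exactly the set of 𝒫-clean strings, and moreover for every generated string S, the final state of its generating path equals the longest suffix of S that belongs to pref(𝒫). -/

import Mathlib

/-- `pref(Ps)`: the set of prefixes of patterns in `Ps` (including the empty string
when `Ps` is nonempty). -/
def prefP {α : Type*} (Ps : Set (List α)) : Set (List α) :=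
  {w | ∃ P ∈ Ps, w <+: P}

/-- One transition of the KMP-style FSM: from state `v` on character `σ`, the transition
is defined iff no suffix of `vσ` lies in `Ps`, and then leads to the longest suffix of
`vσ` lying in `pref(Ps)`. -/
def KmpStep {α : Type*} (Ps : Set (List α)) (v : List α) (σ : α) (w : List α) : Prop :=
  (∀ u, u <:+ v ++ [σ] → u ∉ Ps) ∧
  w <:+ v ++ [σ] ∧ w ∈ prefP Ps ∧
  ∀ u, u <:+ v ++ [σ] → u ∈ prefP Ps → u.length ≤ w.length

/-- `KmpRun Ps S v`: reading the string `S` from the initial state `ε` of the KMP FSM,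
all transitions are defined and the run ends in state `v`. -/
inductive KmpRun {α : Type*} (Ps : Set (List α)) : List α → List α → Prop
  | nil : KmpRun Ps [] []
  | snoc (S : List α) (σ : α) (v w : List α) :
      KmpRun Ps S v → KmpStep Ps v σ w → KmpRun Ps (S ++ [σ]) w

lemma suffix_concat_of_suffix {α : Type*} {v S : List α} (h : v <:+ S) (σ : α) :
    v ++ [σ] <:+ S ++ [σ] := by
  obtain ⟨t, ht⟩ := h
  exact ⟨t, by rw [← List.append_assoc, ht]⟩

lemma suffix_concat_cases {α : Type*} {u S : List α} {σ : α} (h : u <:+ S ++ [σ]) :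
    u = [] ∨ ∃ u', u = u' ++ [σ] ∧ u' <:+ S := by
  induction u using List.reverseRecOn with
  | nil => exact Or.inl rfl
  | append_singleton u' c _ =>
    right
    obtain ⟨t, ht⟩ := h
    rw [← List.append_assoc] at ht
    obtain ⟨h1, h2⟩ := List.append_inj' ht rfl
    obtain rfl : c = σ := by simpa using h2
    exact ⟨u', rfl, ⟨t, h1⟩⟩

lemma infix_concat_cases {α : Type*} {w S : List α} {σ : α} (h : w <:+: S ++ [σ]) :
    w <:+: S ∨ w <:+ S ++ [σ] := by
  obtain ⟨s, t, hst⟩ := h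
  induction t using List.reverseRecOn with
  | nil => exact Or.inr ⟨s, by simpa using hst⟩
  | append_singleton t' c _ =>
    left
    rw [← List.append_assoc] at hst
    obtain ⟨h1, _⟩ := List.append_inj' hst rfl
    exact ⟨s, t', h1⟩

/-- The KMP FSM generates exactly the `Ps`-clean strings, and for every generated string
`S` the final state of its generating path is the longest suffix of `S` in `pref(Ps)`. -/
theorem kmp_generates_exactly_clean
    {α : Type*} (Ps : Set (List α)) (hne : Ps.Nonempty) (heps : ([] : List α) ∉ Ps) :
    (∀ S : List α, (∃ v, KmpRun Ps S v) ↔ ∀ w ∈ Ps, ¬ w <:+: S) ∧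
    (∀ S v, KmpRun Ps S v →
      v <:+ S ∧ v ∈ prefP Ps ∧ ∀ u, u <:+ S → u ∈ prefP Ps → u.length ≤ v.length) := by
  have hnilpref : ([] : List α) ∈ prefP Ps := by
    obtain ⟨P, hP⟩ := hne
    exact ⟨P, hP, List.nil_prefix⟩
  -- Part 2: the invariant
  have inv : ∀ S v, KmpRun Ps S v →
      v <:+ S ∧ v ∈ prefP Ps ∧ ∀ u, u <:+ S → u ∈ prefP Ps → u.length ≤ v.length := by
    intro S v h
    induction h with
    | nil =>
      refine ⟨List.suffix_rfl, hnilpref, fun u hu _ => ?_⟩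
      simpa using hu.length_le
    | snoc S σ v w hrun hstep ih =>
      obtain ⟨hv_suf, hv_pref, hv_max⟩ := ih
      obtain ⟨hclean, hw_suf, hw_pref, hw_max⟩ := hstep
      refine ⟨hw_suf.trans (suffix_concat_of_suffix hv_suf σ), hw_pref, ?_⟩
      intro u hu hupref
      rcases suffix_concat_cases hu with rfl | ⟨u', rfl, hu'⟩
      · simp
      · have hu'pref : u' ∈ prefP Ps := by
          obtain ⟨P, hP, hpre⟩ := hupref
          exact ⟨P, hP, (List.prefix_append u' [σ]).trans hpre⟩
        have hu'v : u' <:+ v :=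
          List.suffix_of_suffix_length_le hu' hv_suf (hv_max u' hu' hu'pref)
        exact hw_max _ (suffix_concat_of_suffix hu'v σ) hupref
  -- generated ⇒ clean
  have gen_clean : ∀ S v, KmpRun Ps S v → ∀ w ∈ Ps, ¬ w <:+: S := by
    intro S v h
    induction h with
    | nil =>
      intro w hw hinf
      rw [List.infix_nil.mp hinf] at hw
      exact heps hw
    | snoc S σ v w hrun hstep ih =>
      intro p hp hinf
      rcases infix_concat_cases hinf with h1 | h2
      · exact ih p hp h1
      · obtain ⟨hv_suf, hv_pref, hv_max⟩ := inv S v hrun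
        obtain ⟨hclean, _, _, _⟩ := hstep
        rcases suffix_concat_cases h2 with rfl | ⟨p', rfl, hp'⟩
        · exact heps hp
        · have hp'pref : p' ∈ prefP Ps := ⟨_, hp, List.prefix_append _ _⟩
          have hp'v : p' <:+ v :=
            List.suffix_of_suffix_length_le hp' hv_suf (hv_max p' hp' hp'pref)
          exact hclean _ (suffix_concat_of_suffix hp'v σ) hp
  -- clean ⇒ generated
  have clean_gen : ∀ S : List α, (∀ w ∈ Ps, ¬ w <:+: S) → ∃ v, KmpRun Ps S v := by
    intro S
    induction S using List.reverseRecOn with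
    | nil => exact fun _ => ⟨[], KmpRun.nil⟩
    | append_singleton S σ ih =>
      intro hclean
      have hScl : ∀ w ∈ Ps, ¬ w <:+: S := fun w hw hinf =>
        hclean w hw (hinf.trans (List.prefix_append S [σ]).isInfix)
      obtain ⟨v, hrun⟩ := ih hScl
      obtain ⟨hv_suf, _, _⟩ := inv S v hrun
      have hTfin : {u | u <:+ v ++ [σ] ∧ u ∈ prefP Ps}.Finite := by
        apply Set.Finite.subset (List.finite_toSet (v ++ [σ]).tails)
        intro u hu
        exact (List.mem_tails _ _).mpr hu.1
      have hTne : {u | u <:+ v ++ [σ] ∧ u ∈ prefP Ps}.Nonempty :=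
        ⟨[], List.nil_suffix, hnilpref⟩
      obtain ⟨w, hwT, hwmax⟩ := Set.Finite.exists_maximalFor List.length _ hTfin hTne
      refine ⟨w, KmpRun.snoc S σ v w hrun ⟨?_, hwT.1, hwT.2, ?_⟩⟩
      · intro u hu huPs
        exact hclean u huPs (hu.trans (suffix_concat_of_suffix hv_suf σ)).isInfix
      · intro u hu hupref
        by_contra hlt
        push_neg at hlt
        have := hwmax (j := u) ⟨hu, hupref⟩ (le_of_lt hlt)
        omega
  exact ⟨fun S => ⟨fun ⟨v, h⟩ => gen_clean S v h, clean_gen S⟩, inv⟩
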